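/- Integral version of the consistency estimate: let (X, μ) be a measure space, let m, v : X → ℝ³ be measurable with |m(x)| = 1 and m(x)·v(x) = 0 for μ-almost every x, and let k > 0. Then ∫_X | (1/k)·((m(x) + k v(x))/|m(x) + k v(x)| − m(x)) − v(x) | dμ(x) ≤ (k/2) ∫_X |v(x)|² dμ(x). -/

import Mathlib

open MeasureTheory
open scoped RealInnerProductSpace ENNReal

lemma pointwise_consistency_estimate (m v : EuclideanSpace ℝ (Fin 3))
    (hm1 : ‖m‖ = 1) (hmv : ⟪m, v⟫ = 0) (k : ℝ) (hk : 0 < k) :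
    ‖(1 / k) • (‖m + k • v‖⁻¹ • (m + k • v) - m) - v‖ ≤ (k / 2) * ‖v‖ ^ 2 := by
  set w := m + k • v with hw
  have hw2 : ‖w‖ ^ 2 = 1 + k ^ 2 * ‖v‖ ^ 2 := by
    have := @norm_add_sq_real (EuclideanSpace ℝ (Fin 3)) _ _ m (k • v)
    rw [norm_smul, real_inner_smul_right] at this
    simp only [hw, this, hm1, hmv, Real.norm_eq_abs, abs_of_pos hk]
    ring
  have hwpos : (1:ℝ) ≤ ‖w‖ := by nlinarith [norm_nonneg w, norm_nonneg v, sq_nonneg (k * ‖v‖)]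
  have hwne : ‖w‖ ≠ 0 := by positivity
  have key : (1 / k) • (‖w‖⁻¹ • w - m) - v = ((1/k) * (‖w‖⁻¹ - 1)) • w := by
    have hm' : m = w - k • v := by simp [hw]
    rw [hm']
    match_scalars <;> (field_simp; try ring)
  rw [key, norm_smul, Real.norm_eq_abs]
  have habs : |(1/k) * (‖w‖⁻¹ - 1)| = (1/k) * (1 - ‖w‖⁻¹) := by
    rw [abs_mul, abs_of_pos (by positivity), abs_of_nonpos]
    · ring
    · simp only [sub_nonpos]
      exact inv_le_one_of_one_le₀ hwpos
  rw [habs]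
  have : (1/k) * (1 - ‖w‖⁻¹) * ‖w‖ = (1/k) * (‖w‖ - 1) := by
    field_simp
  rw [this]
  -- ‖w‖ - 1 ≤ k²‖v‖²/2
  have hle : ‖w‖ - 1 ≤ k ^ 2 * ‖v‖ ^ 2 / 2 := by
    nlinarith [norm_nonneg w]
  rw [div_mul_eq_mul_div, one_mul, div_le_iff₀ hk]
  nlinarith

theorem integral_consistency_estimate {X : Type*} [MeasurableSpace X]
    (μ : Measure X) (m v : X → EuclideanSpace ℝ (Fin 3))
    (hm : Measurable m) (hv : Measurable v)
    (hm1 : ∀ᵐ x ∂μ, ‖m x‖ = 1) (hmv : ∀ᵐ x ∂μ, ⟪m x, v x⟫ = 0)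
    (k : ℝ) (hk : 0 < k) :
    ∫⁻ x, (‖(1 / k) • (‖m x + k • v x‖⁻¹ • (m x + k • v x) - m x) - v x‖₊ :
        ℝ≥0∞) ∂μ ≤
      ENNReal.ofReal (k / 2) * ∫⁻ x, (‖v x‖₊ : ℝ≥0∞) ^ 2 ∂μ := by
  rw [← lintegral_const_mul' _ _ ENNReal.ofReal_ne_top]
  refine lintegral_mono_ae ?_
  filter_upwards [hm1, hmv] with x h1 h2
  have hpt := pointwise_consistency_estimate (m x) (v x) h1 h2 k hk
  calc (‖(1 / k) • (‖m x + k • v x‖⁻¹ • (m x + k • v x) - m x) - v x‖₊ : ℝ≥0∞)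
      = ENNReal.ofReal ‖(1 / k) • (‖m x + k • v x‖⁻¹ • (m x + k • v x) - m x) - v x‖ := by
        rw [ofReal_norm, enorm_eq_nnnorm]
    _ ≤ ENNReal.ofReal ((k / 2) * ‖v x‖ ^ 2) := ENNReal.ofReal_le_ofReal hpt
    _ = ENNReal.ofReal (k / 2) * (‖v x‖₊ : ℝ≥0∞) ^ 2 := by
        rw [ENNReal.ofReal_mul (by positivity), ← enorm_eq_nnnorm, ← ofReal_norm,
          ← ENNReal.ofReal_pow (norm_nonneg _)]
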